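/- Let f : (ℚ₊)ⁿ → ℚ be homogeneous of degree ℓ ∈ ℤ, i.e. f(λx₁,…,λxₙ) = λ^ℓ · f(x₁,…,xₙ) for all positive rationals λ, x₁,…,xₙ. If the equation f(x₁,…,xₙ) = 0 is partition regular on ℕ with injectivity |{x_{i₁},…,x_{i_p}}| ≥ s, then the equation f(1/x₁,…,1/xₙ) = 0 is also partition regular on ℕ with injectivity |{x_{i₁},…,x_{i_p}}| ≥ s; that is, for every finite partition of ℕ there are monochromatic a₁,…,aₙ with f(1/a₁,…,1/aₙ) = 0 and |{a_{i₁},…,a_{i_p}}| ≥ s. -/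

import Mathlib

/- `ℕ+` plays the role of the paper's `ℕ` (the positive integers). -/

open Filter in
lemma compact_pr {n r : ℕ} (Sol : (Fin n → ℕ+) → Prop)
    (h : ∀ C : ℕ+ → Fin r, ∃ a, (∀ i j, C (a i) = C (a j)) ∧ Sol a) :
    ∃ N : ℕ+, ∀ C : ℕ+ → Fin r, ∃ a, (∀ i, a i ≤ N) ∧
      (∀ i j, C (a i) = C (a j)) ∧ Sol a := by
  by_contra hcon
  push_neg at hcon
  choose D hD using hcon
  set U : Ultrafilter ℕ+ := Filter.hyperfilter ℕ+ with hU
  have key : ∀ k : ℕ+, ∃ i : Fin r, ∀ᶠ N in (U : Filter ℕ+), D N k = i := by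
    intro k
    obtain ⟨i, hi⟩ := Ultrafilter.eq_pure_of_finite (U.map (fun N => D N k))
    refine ⟨i, ?_⟩
    have h2 : ∀ᶠ x in ((U.map (fun N => D N k) : Ultrafilter (Fin r)) : Filter (Fin r)), x = i := by
      rw [hi]; exact Filter.eventually_pure.2 rfl
    exact h2
  choose C hC using key
  obtain ⟨a, hmono, hsol⟩ := h C
  set N₀ : ℕ+ := Finset.univ.sup (fun i => a i) with hN₀
  have hfin : ({N : ℕ+ | ¬ N₀ ≤ N}).Finite := by
    have hsub : {N : ℕ+ | ¬ N₀ ≤ N} ⊆ (fun N : ℕ+ => (N : ℕ)) ⁻¹' (Set.Iio (N₀ : ℕ)) := by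
      intro N hN
      simp only [Set.mem_setOf_eq, not_le] at hN
      simpa using hN
    exact ((Set.finite_Iio ((N₀ : ℕ))).preimage
      (Set.injOn_of_injective (fun x y hxy => PNat.coe_injective hxy))).subset hsub
  have hbig : ∀ᶠ N in (U : Filter ℕ+), N₀ ≤ N := by
    have := hfin.compl_mem_hyperfilter
    rw [← hU] at this
    filter_upwards [this] with N hN
    simpa using hN
  have hall : ∀ᶠ N in (U : Filter ℕ+), ∀ i, D N (a i) = C (a i) :=
    Filter.eventually_all.2 fun i => hC (a i)
  obtain ⟨N, hN1, hN2⟩ := (hbig.and hall).exists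
  exact hD N a (fun i => le_trans (Finset.le_sup (Finset.mem_univ i)) hN1)
    (fun i j => by rw [hN2 i, hN2 j]; exact hmono i j) hsol


/-- If `f` is homogeneous of degree `ℓ ∈ ℤ` (on positive rationals) and the
equation `f(x₁,…,xₙ) = 0` is partition regular on `ℕ` with injectivity
`|{x_{i₁},…,x_{i_p}}| ≥ s`, then so is the equation `f(1/x₁,…,1/xₙ) = 0`. -/
theorem pr_of_inverses {n p : ℕ} (f : (Fin n → ℚ) → ℚ) (ι : Fin p → Fin n)
    (s : ℕ) (ℓ : ℤ)
    (hhom : ∀ lam : ℚ, 0 < lam → ∀ x : Fin n → ℚ, (∀ i, 0 < x i) →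
      f (fun i => lam * x i) = lam ^ ℓ * f x)
    (hPR : ∀ (r : ℕ) (C : ℕ+ → Fin r), ∃ a : Fin n → ℕ+,
      (∀ i j, C (a i) = C (a j)) ∧ f (fun i => ((a i : ℕ) : ℚ)) = 0 ∧
      s ≤ (Finset.image (fun j => a (ι j)) Finset.univ).card) :
    ∀ (r : ℕ) (C : ℕ+ → Fin r), ∃ a : Fin n → ℕ+,
      (∀ i j, C (a i) = C (a j)) ∧ f (fun i => (((a i : ℕ) : ℚ))⁻¹) = 0 ∧
      s ≤ (Finset.image (fun j => a (ι j)) Finset.univ).card := by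
  intro r C
  obtain ⟨N, hN⟩ := compact_pr
    (fun a => f (fun i => ((a i : ℕ) : ℚ)) = 0 ∧
      s ≤ (Finset.image (fun j => a (ι j)) Finset.univ).card)
    (fun C => (hPR r C).imp fun a ⟨h1, h2, h3⟩ => ⟨h1, h2, h3⟩)
  classical
  set L : ℕ := Nat.factorial (N : ℕ) with hL
  have hLpos : 0 < L := Nat.factorial_pos _
  set g : ℕ+ → ℕ+ := fun k =>
    if h : (k : ℕ) ∣ L then ⟨L / (k : ℕ), Nat.div_pos (Nat.le_of_dvd hLpos h) k.pos⟩ else 1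
    with hg
  obtain ⟨a, hbdd, hmono, hsol, hcard⟩ := hN (fun k => C (g k))
  have hdvd : ∀ i, ((a i : ℕ)) ∣ L := fun i =>
    Nat.dvd_factorial (a i).pos ((PNat.coe_le_coe _ _).2 (hbdd i))
  set b : Fin n → ℕ+ := fun i => g (a i) with hb
  have hgval : ∀ k : ℕ+, (k : ℕ) ∣ L → ((g k : ℕ)) = L / (k : ℕ) := by
    intro k hk
    simp only [hg, dif_pos hk]
    simp [hk]
  have hbval : ∀ i, ((b i : ℕ)) = L / (a i : ℕ) := fun i => hgval (a i) (hdvd i)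
  refine ⟨b, fun i j => hmono i j, ?_, ?_⟩
  · -- f (1/b) = 0
    have harg : (fun i => (((b i : ℕ) : ℚ))⁻¹) =
        fun i => ((L : ℚ))⁻¹ * ((a i : ℕ) : ℚ) := by
      funext i
      have : ((b i : ℕ) : ℚ) = (L : ℚ) / ((a i : ℕ) : ℚ) :=
        by rw [hbval i]; exact Nat.cast_div (hdvd i) (by exact_mod_cast (a i).pos.ne')
      rw [this]
      rw [inv_div]
      ring
    rw [harg, hhom _ (by positivity) _ (fun i => by exact_mod_cast (a i).pos), hsol, mul_zero]
  · -- cardinality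
    have himg : (Finset.image (fun j => b (ι j)) Finset.univ) =
        Finset.image g (Finset.image (fun j => a (ι j)) Finset.univ) := by
      rw [Finset.image_image]; rfl
    rw [himg, Finset.card_image_of_injOn]
    · exact hcard
    · intro x hx y hy hxy
      simp only [Finset.coe_image, Set.mem_image, Finset.mem_coe, Finset.mem_image] at hx hy
      obtain ⟨jx, _, hjx⟩ := hx
      obtain ⟨jy, _, hjy⟩ := hy
      have hxd : (x : ℕ) ∣ L := hjx ▸ hdvd (ι jx)
      have hyd : (y : ℕ) ∣ L := hjy ▸ hdvd (ι jy)
      have hgx : ((g x : ℕ)) = L / (x : ℕ) := hgval x hxd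
      have hgy : ((g y : ℕ)) = L / (y : ℕ) := hgval y hyd
      have : L / (x : ℕ) = L / (y : ℕ) := by rw [← hgx, ← hgy, hxy]
      have hx' : (x : ℕ) = (y : ℕ) := by
        have h1 : L / (L / (x : ℕ)) = (x : ℕ) := Nat.div_div_self hxd hLpos.ne'
        have h2 : L / (L / (y : ℕ)) = (y : ℕ) := Nat.div_div_self hyd hLpos.ne'
        rw [← h1, ← h2, this]
      exact PNat.coe_injective hx'
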